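/- arXiv:0706.3141 — 2 statements merged into one kernel-verified Lean document; each statement's English description precedes it below -/
import Mathlib

section
/- (Discrete higher-order Euler–Lagrange equation, r = 2 on ℤ) Let a, b ∈ ℤ with b ≥ a + 5, and let L : ℤ × ℝ × ℝ × ℝ → ℝ, (t, u₀, u₁, u₂) ↦ L(t,u₀,u₁,u₂), be continuously differentiable in (u₀, u₁, u₂). Suppose y* : {a, …, b} → ℝ is a local minimizer (with respect to the sup norm) of the functional 𝓛[y] = ∑_{t=a}^{b−2} L(t, y(t+2), Δy(t+1), Δ²y(t)) subject to y(a) = y_a, y(b−1) = y_b, Δy(a) = y_a¹, Δy(b−1) = y_b¹, where Δy(t) = y(t+1) − y(t). Then for all t ∈ {a, …, b−4}: L_{u₀}(·)(t) − Δ[L_{u₁}(·)](t) + Δ²[L_{u₂}(·)](t) = 0, where (·) = (t, y*(t+2), Δy*(t+1), Δ²y*(t)) and Δ, Δ² act on the functions t ↦ L_{u₁}(·), t ↦ L_{u₂}(·). -/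
lemma chain_partial (L : ℝ → ℝ → ℝ → ℝ) (p0 p1 p2 c₀ c₁ c₂ α₀ α₁ α₂ : ℝ)
    (hC : ContDiff ℝ 1 (fun p : ℝ × ℝ × ℝ => L p.1 p.2.1 p.2.2))
    (h0 : HasDerivAt (fun x => L x c₁ c₂) p0 c₀)
    (h1 : HasDerivAt (fun x => L c₀ x c₂) p1 c₁)
    (h2 : HasDerivAt (fun x => L c₀ c₁ x) p2 c₂) :
    HasDerivAt (fun ε : ℝ => L (c₀ + α₀ * ε) (c₁ + α₁ * ε) (c₂ + α₂ * ε))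
      (α₀ * p0 + α₁ * p1 + α₂ * p2) 0 := by
  set F : ℝ × ℝ × ℝ → ℝ := fun p => L p.1 p.2.1 p.2.2 with hF
  have hdF : DifferentiableAt ℝ F (c₀, c₁, c₂) :=
    (hC.differentiable one_ne_zero).differentiableAt
  set f := fderiv ℝ F (c₀, c₁, c₂) with hf
  have hFd : HasFDerivAt F f (c₀, c₁, c₂) := hdF.hasFDerivAt
  have hc : ∀ c α : ℝ, HasDerivAt (fun ε : ℝ => c + α * ε) α (0:ℝ) := by
    intro c α
    simpa using HasDerivAt.const_add c (HasDerivAt.const_mul α (hasDerivAt_id (0:ℝ)))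
  have hγ0 : HasDerivAt (fun x : ℝ => ((x, c₁, c₂) : ℝ × ℝ × ℝ)) ((1:ℝ), (0:ℝ), (0:ℝ)) c₀ :=
    HasDerivAt.prodMk (hasDerivAt_id c₀) (hasDerivAt_const c₀ (c₁, c₂))
  have hγ1 : HasDerivAt (fun x : ℝ => ((c₀, x, c₂) : ℝ × ℝ × ℝ)) ((0:ℝ), (1:ℝ), (0:ℝ)) c₁ :=
    HasDerivAt.prodMk (hasDerivAt_const c₁ c₀) (HasDerivAt.prodMk (hasDerivAt_id c₁) (hasDerivAt_const c₁ c₂))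
  have hγ2 : HasDerivAt (fun x : ℝ => ((c₀, c₁, x) : ℝ × ℝ × ℝ)) ((0:ℝ), (0:ℝ), (1:ℝ)) c₂ :=
    HasDerivAt.prodMk (hasDerivAt_const c₂ c₀) (HasDerivAt.prodMk (hasDerivAt_const c₂ c₁) (hasDerivAt_id c₂))
  have e0 : f ((1:ℝ), (0:ℝ), (0:ℝ)) = p0 := (HasFDerivAt.comp_hasDerivAt (l := F) (l' := f) c₀ hFd hγ0).unique h0
  have e1 : f ((0:ℝ), (1:ℝ), (0:ℝ)) = p1 := (HasFDerivAt.comp_hasDerivAt (l := F) (l' := f) c₁ hFd hγ1).unique h1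
  have e2 : f ((0:ℝ), (0:ℝ), (1:ℝ)) = p2 := (HasFDerivAt.comp_hasDerivAt (l := F) (l' := f) c₂ hFd hγ2).unique h2
  have hγ : HasDerivAt
      (fun ε : ℝ => ((c₀ + α₀ * ε, c₁ + α₁ * ε, c₂ + α₂ * ε) : ℝ × ℝ × ℝ))
      ((α₀, α₁, α₂) : ℝ × ℝ × ℝ) 0 :=
    HasDerivAt.prodMk (hc c₀ α₀) (HasDerivAt.prodMk (hc c₁ α₁) (hc c₂ α₂))
  have hFd' : HasFDerivAt F f (c₀ + α₀ * 0, c₁ + α₁ * 0, c₂ + α₂ * 0) := by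
    simpa using hFd
  have hcomp := hFd'.comp_hasDerivAt 0 hγ
  have key : f ((α₀, α₁, α₂) : ℝ × ℝ × ℝ) = α₀ * p0 + α₁ * p1 + α₂ * p2 := by
    have hdecomp : ((α₀, α₁, α₂) : ℝ × ℝ × ℝ)
        = α₀ • ((1:ℝ), (0:ℝ), (0:ℝ)) + α₁ • ((0:ℝ), (1:ℝ), (0:ℝ)) + α₂ • ((0:ℝ), (0:ℝ), (1:ℝ)) := by
      simp [Prod.ext_iff]
    rw [hdecomp, map_add, map_add, map_smul, map_smul, map_smul, e0, e1, e2]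
    simp [smul_eq_mul]
  exact key ▸ hcomp

/-- Discrete higher-order Euler–Lagrange equation (`r = 2`, `T = ℤ`): if `y*` is a
local minimizer (sup norm) of `𝓛[y] = ∑_{t=a}^{b−2} L(t, y(t+2), Δy(t+1), Δ²y(t))`
subject to `y(a) = y_a`, `y(b−1) = y_b`, `Δy(a) = y_a¹`, `Δy(b−1) = y_b¹`, then
`L_{u₀}(·) − Δ[L_{u₁}(·)] + Δ²[L_{u₂}(·)] = 0` on `{a, …, b−4}`. Here `L0, L1, L2`
are the partial derivatives of `L` with respect to `u₀, u₁, u₂`. -/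
theorem discrete_euler_lagrange_second_order (a b : ℤ) (hab : a + 5 ≤ b)
    (L L0 L1 L2 : ℤ → ℝ → ℝ → ℝ → ℝ)
    (hC : ∀ t : ℤ, ContDiff ℝ 1 (fun p : ℝ × ℝ × ℝ => L t p.1 p.2.1 p.2.2))
    (hL0 : ∀ (t : ℤ) (u₀ u₁ u₂ : ℝ), HasDerivAt (fun x => L t x u₁ u₂) (L0 t u₀ u₁ u₂) u₀)
    (hL1 : ∀ (t : ℤ) (u₀ u₁ u₂ : ℝ), HasDerivAt (fun x => L t u₀ x u₂) (L1 t u₀ u₁ u₂) u₁)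
    (hL2 : ∀ (t : ℤ) (u₀ u₁ u₂ : ℝ), HasDerivAt (fun x => L t u₀ u₁ x) (L2 t u₀ u₁ u₂) u₂)
    (ya yb ya1 yb1 : ℝ) (ystar : ℤ → ℝ)
    (hbc : ystar a = ya ∧ ystar (b - 1) = yb ∧
      ystar (a + 1) - ystar a = ya1 ∧ ystar b - ystar (b - 1) = yb1)
    (hmin : ∃ δ > (0 : ℝ), ∀ y : ℤ → ℝ,
      (y a = ya ∧ y (b - 1) = yb ∧ y (a + 1) - y a = ya1 ∧ y b - y (b - 1) = yb1) →
      (∀ t ∈ Finset.Icc a b, |y t - ystar t| < δ) →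
      ∑ t ∈ Finset.Icc a (b - 2),
          L t (ystar (t + 2)) (ystar (t + 2) - ystar (t + 1))
            (ystar (t + 2) - 2 * ystar (t + 1) + ystar t)
        ≤ ∑ t ∈ Finset.Icc a (b - 2),
            L t (y (t + 2)) (y (t + 2) - y (t + 1)) (y (t + 2) - 2 * y (t + 1) + y t)) :
    ∀ t ∈ Finset.Icc a (b - 4),
      L0 t (ystar (t + 2)) (ystar (t + 2) - ystar (t + 1))
          (ystar (t + 2) - 2 * ystar (t + 1) + ystar t)
      - (L1 (t + 1) (ystar (t + 3)) (ystar (t + 3) - ystar (t + 2))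
            (ystar (t + 3) - 2 * ystar (t + 2) + ystar (t + 1))
         - L1 t (ystar (t + 2)) (ystar (t + 2) - ystar (t + 1))
            (ystar (t + 2) - 2 * ystar (t + 1) + ystar t))
      + (L2 (t + 2) (ystar (t + 4)) (ystar (t + 4) - ystar (t + 3))
            (ystar (t + 4) - 2 * ystar (t + 3) + ystar (t + 2))
         - 2 * L2 (t + 1) (ystar (t + 3)) (ystar (t + 3) - ystar (t + 2))
            (ystar (t + 3) - 2 * ystar (t + 2) + ystar (t + 1))
         + L2 t (ystar (t + 2)) (ystar (t + 2) - ystar (t + 1))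
            (ystar (t + 2) - 2 * ystar (t + 1) + ystar t)) = 0 := by
  intro t ht
  rw [Finset.mem_Icc] at ht
  obtain ⟨hta, htb⟩ := ht
  obtain ⟨hya, hyb, hya1, hyb1⟩ := hbc
  obtain ⟨δ, hδ, hmin⟩ := hmin
  set e : ℤ → ℝ := fun u => if u = t + 2 then 1 else 0 with he
  set d : ℤ → ℝ := fun u =>
      e (u + 2) * L0 u (ystar (u + 2)) (ystar (u + 2) - ystar (u + 1))
          (ystar (u + 2) - 2 * ystar (u + 1) + ystar u)
    + (e (u + 2) - e (u + 1)) * L1 u (ystar (u + 2)) (ystar (u + 2) - ystar (u + 1))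
          (ystar (u + 2) - 2 * ystar (u + 1) + ystar u)
    + (e (u + 2) - 2 * e (u + 1) + e u) * L2 u (ystar (u + 2)) (ystar (u + 2) - ystar (u + 1))
          (ystar (u + 2) - 2 * ystar (u + 1) + ystar u) with hd
  set g : ℝ → ℝ := fun ε => ∑ u ∈ Finset.Icc a (b - 2),
      L u (ystar (u + 2) + e (u + 2) * ε)
          (ystar (u + 2) - ystar (u + 1) + (e (u + 2) - e (u + 1)) * ε)
          (ystar (u + 2) - 2 * ystar (u + 1) + ystar u + (e (u + 2) - 2 * e (u + 1) + e u) * ε)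
    with hgdef
  -- derivative of g at 0
  have hderiv : HasDerivAt g (∑ u ∈ Finset.Icc a (b - 2), d u) 0 := by
    rw [hgdef]
    refine HasDerivAt.fun_sum fun u _ => ?_
    exact chain_partial (L u) _ _ _ _ _ _ _ _ _ (hC u) (hL0 u _ _ _) (hL1 u _ _ _) (hL2 u _ _ _)
  -- g has a local minimum at 0
  have hloc : IsLocalMin g 0 := by
    filter_upwards [Metric.ball_mem_nhds (0:ℝ) hδ] with ε hε
    have hε' : |ε| < δ := by simpa [Real.dist_eq] using hε
    have hea : e a = 0 := by simp only [he]; rw [if_neg (by omega)]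
    have hea1 : e (a + 1) = 0 := by simp only [he]; rw [if_neg (by omega)]
    have heb : e (b - 1) = 0 := by simp only [he]; rw [if_neg (by omega)]
    have hebb : e b = 0 := by simp only [he]; rw [if_neg (by omega)]
    have key := hmin (fun u => ystar u + e u * ε)
      (by
        refine ⟨?_, ?_, ?_, ?_⟩
        · show ystar a + e a * ε = ya
          rw [hea]; simp [hya]
        · show ystar (b - 1) + e (b - 1) * ε = yb
          rw [heb]; simp [hyb]
        · show ystar (a + 1) + e (a + 1) * ε - (ystar a + e a * ε) = ya1
          rw [hea, hea1]; simpa using hya1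
        · show ystar b + e b * ε - (ystar (b - 1) + e (b - 1) * ε) = yb1
          rw [heb, hebb]; simpa using hyb1)
      (by
        intro u _
        have : ystar u + e u * ε - ystar u = e u * ε := by ring
        rw [this, he]
        by_cases h : u = t + 2
        · simp [h, hε']
        · simp [h, hδ])
    have h0 : g 0 = ∑ u ∈ Finset.Icc a (b - 2),
        L u (ystar (u + 2)) (ystar (u + 2) - ystar (u + 1))
          (ystar (u + 2) - 2 * ystar (u + 1) + ystar u) := by
      rw [hgdef]; simp
    have h1 : g ε = ∑ u ∈ Finset.Icc a (b - 2),
        L u (ystar (u + 2) + e (u + 2) * ε)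
          ((ystar (u + 2) + e (u + 2) * ε) - (ystar (u + 1) + e (u + 1) * ε))
          ((ystar (u + 2) + e (u + 2) * ε) - 2 * (ystar (u + 1) + e (u + 1) * ε)
            + (ystar u + e u * ε)) := by
      rw [hgdef]
      refine Finset.sum_congr rfl fun u _ => ?_
      congr 1 <;> ring
    rw [h0, h1]
    exact key
  have hzero := hloc.hasDerivAt_eq_zero hderiv
  -- reduce the sum to three terms
  have hsubset : ({t, t + 1, t + 2} : Finset ℤ) ⊆ Finset.Icc a (b - 2) := by
    intro x hx
    simp only [Finset.mem_insert, Finset.mem_singleton] at hx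
    rw [Finset.mem_Icc]
    rcases hx with h | h | h <;> omega
  have hvanish : ∀ x ∈ Finset.Icc a (b - 2), x ∉ ({t, t + 1, t + 2} : Finset ℤ) → d x = 0 := by
    intro x _ hnx
    simp only [Finset.mem_insert, Finset.mem_singleton, not_or] at hnx
    obtain ⟨h1, h2, h3⟩ := hnx
    have e1 : e x = 0 := by simp only [he]; rw [if_neg (by omega)]
    have e2 : e (x + 1) = 0 := by simp only [he]; rw [if_neg (by omega)]
    have e3 : e (x + 2) = 0 := by simp only [he]; rw [if_neg (by omega)]
    simp only [hd, e1, e2, e3]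
    ring
  have hsum : ∑ u ∈ Finset.Icc a (b - 2), d u = d t + d (t + 1) + d (t + 2) := by
    rw [← Finset.sum_subset hsubset hvanish]
    rw [Finset.sum_insert (by simp), Finset.sum_insert (by simp),
      Finset.sum_singleton]
    ring
  rw [hsum] at hzero
  have v1 : e t = 0 := by simp only [he]; rw [if_neg (by omega)]
  have v2 : e (t + 1) = 0 := by simp only [he]; rw [if_neg (by omega)]
  have v3 : e (t + 2) = 1 := by simp [he]
  have v4 : e (t + 1 + 2) = 0 := by simp only [he]; rw [if_neg (by omega)]
  have v5 : e (t + 1 + 1) = 1 := by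
    have h : t + 1 + 1 = t + 2 := by ring
    simp [he, h]
  have v6 : e (t + 2 + 2) = 0 := by simp only [he]; rw [if_neg (by omega)]
  have v7 : e (t + 2 + 1) = 0 := by simp only [he]; rw [if_neg (by omega)]
  simp only [hd, v1, v2, v3, v4, v5, v6, v7] at hzero
  rw [show (t + 1 + 2 : ℤ) = t + 3 by ring, show (t + 1 + 1 : ℤ) = t + 2 by ring,
    show (t + 2 + 2 : ℤ) = t + 4 by ring, show (t + 2 + 1 : ℤ) = t + 3 by ring] at hzero
  linarith [hzero]
end

section
/- (First-order discrete Euler–Lagrange equation on ℤ) Let a, b ∈ ℤ with b ≥ a + 2 and let L : ℤ × ℝ × ℝ → ℝ be continuously differentiable in its last two arguments. If y* : {a, …, b} → ℝ is a local minimizer of 𝓛[y] = ∑_{t=a}^{b−1} L(t, y(t+1), Δy(t)) subject to y(a) = y_a and y(b) = y_b, then for all t ∈ {a, …, b−2}: Δ[L_{u₁}(t, y*(t+1), Δy*(t))] = L_{u₀}(t, y*(t+1), Δy*(t)), where Δf(t) = f(t+1) − f(t). -/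
lemma aux_partial (f : ℝ × ℝ → ℝ) (u₀ u₁ f0 f1 : ℝ)
    (hC : ContDiff ℝ 1 f)
    (h0 : HasDerivAt (fun x => f (x, u₁)) f0 u₀)
    (h1 : HasDerivAt (fun x => f (u₀, x)) f1 u₁)
    (c : ℝ → ℝ × ℝ) (d : ℝ × ℝ) (x : ℝ) (hcx : c x = (u₀, u₁))
    (hc : HasDerivAt c d x) :
    HasDerivAt (fun ε => f (c ε)) (d.1 * f0 + d.2 * f1) x := by
  have hF : HasFDerivAt f (fderiv ℝ f (u₀, u₁)) (u₀, u₁) :=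
    (hC.differentiable one_ne_zero (u₀, u₁)).hasFDerivAt
  set F := fderiv ℝ f (u₀, u₁) with hFdef
  have e0 : F (1, 0) = f0 := by
    have h := hF.comp_hasDerivAt u₀ ((hasDerivAt_id u₀).prodMk (hasDerivAt_const (x := u₀) (c := u₁)))
    exact h.unique h0
  have e1 : F (0, 1) = f1 := by
    have h := hF.comp_hasDerivAt u₁ ((hasDerivAt_const (x := u₁) (c := u₀)).prodMk (hasDerivAt_id u₁))
    exact h.unique h1
  have hF' : HasFDerivAt f F (c x) := by rw [hcx]; exact hF
  have h := hF'.comp_hasDerivAt x hc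
  have hd : F d = d.1 * f0 + d.2 * f1 := by
    have hdd : d = d.1 • ((1 : ℝ), (0 : ℝ)) + d.2 • ((0 : ℝ), (1 : ℝ)) := by
      ext <;> simp
    conv_lhs => rw [hdd]
    rw [map_add, map_smul, map_smul, e0, e1, smul_eq_mul, smul_eq_mul]
  rw [hd] at h
  exact h

/-- First-order discrete Euler–Lagrange equation on `ℤ`: if `y*` is a local
minimizer (sup norm) of `𝓛[y] = ∑_{t=a}^{b−1} L(t, y(t+1), Δy(t))` subject to
`y(a) = y_a`, `y(b) = y_b`, then `Δ[L_{u₁}(t, y*(t+1), Δy*(t))] = L_{u₀}(t, y*(t+1), Δy*(t))`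
for `t ∈ {a, …, b−2}`. Here `L0, L1` are the partial derivatives of `L` with
respect to its second and third arguments. -/
theorem discrete_euler_lagrange_first_order (a b : ℤ) (hab : a + 2 ≤ b)
    (L L0 L1 : ℤ → ℝ → ℝ → ℝ)
    (hC : ∀ t : ℤ, ContDiff ℝ 1 (fun p : ℝ × ℝ => L t p.1 p.2))
    (hL0 : ∀ (t : ℤ) (u₀ u₁ : ℝ), HasDerivAt (fun x => L t x u₁) (L0 t u₀ u₁) u₀)
    (hL1 : ∀ (t : ℤ) (u₀ u₁ : ℝ), HasDerivAt (fun x => L t u₀ x) (L1 t u₀ u₁) u₁)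
    (ya yb : ℝ) (ystar : ℤ → ℝ) (hbc : ystar a = ya ∧ ystar b = yb)
    (hmin : ∃ δ > (0 : ℝ), ∀ y : ℤ → ℝ, (y a = ya ∧ y b = yb) →
      (∀ t ∈ Finset.Icc a b, |y t - ystar t| < δ) →
      ∑ t ∈ Finset.Icc a (b - 1), L t (ystar (t + 1)) (ystar (t + 1) - ystar t)
        ≤ ∑ t ∈ Finset.Icc a (b - 1), L t (y (t + 1)) (y (t + 1) - y t)) :
    ∀ t ∈ Finset.Icc a (b - 2),
      L1 (t + 1) (ystar (t + 2)) (ystar (t + 2) - ystar (t + 1))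
        - L1 t (ystar (t + 1)) (ystar (t + 1) - ystar t)
      = L0 t (ystar (t + 1)) (ystar (t + 1) - ystar t) := by
  intro t ht
  rw [Finset.mem_Icc] at ht
  obtain ⟨hta, htb⟩ := ht
  obtain ⟨δ, hδ, hmin⟩ := hmin
  set S := Finset.Icc a (b - 1) with hS
  have htS : t ∈ S := Finset.mem_Icc.mpr ⟨hta, by omega⟩
  have ht1S : t + 1 ∈ S \ {t} := by
    simp only [Finset.mem_sdiff, hS, Finset.mem_Icc, Finset.mem_singleton]
    omega
  -- the variation function
  set g : ℝ → ℝ := fun ε =>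
      L t (ystar (t + 1) + ε) (ystar (t + 1) + ε - ystar t)
        + L (t + 1) (ystar (t + 2)) (ystar (t + 2) - (ystar (t + 1) + ε)) with hg
  -- sum decomposition
  have hsum : ∀ y : ℤ → ℝ, (∀ s, s ≠ t + 1 → y s = ystar s) →
      ∑ s ∈ S, L s (y (s + 1)) (y (s + 1) - y s)
        = L t (y (t + 1)) (y (t + 1) - ystar t)
          + L (t + 1) (ystar (t + 2)) (ystar (t + 2) - y (t + 1))
          + ∑ s ∈ (S \ {t}) \ {t + 1}, L s (ystar (s + 1)) (ystar (s + 1) - ystar s) := by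
    intro y hy
    rw [Finset.sum_eq_sum_sdiff_singleton_add htS, Finset.sum_eq_sum_sdiff_singleton_add ht1S]
    have hrest : ∑ s ∈ (S \ {t}) \ {t + 1}, L s (y (s + 1)) (y (s + 1) - y s)
        = ∑ s ∈ (S \ {t}) \ {t + 1}, L s (ystar (s + 1)) (ystar (s + 1) - ystar s) := by
      refine Finset.sum_congr rfl (fun s hs => ?_)
      simp only [Finset.mem_sdiff, Finset.mem_singleton] at hs
      rw [hy (s + 1) (by omega), hy s hs.2]
    rw [hrest, hy t (by omega), hy (t + 1 + 1) (by omega)]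
    ring_nf
  -- g has a local min at 0
  have hlm : IsLocalMin g 0 := by
    have hball : Metric.ball (0 : ℝ) δ ∈ nhds (0 : ℝ) := Metric.ball_mem_nhds 0 hδ
    refine Filter.eventually_of_mem hball (fun ε hε => ?_)
    have hεδ : |ε| < δ := by simpa [Real.dist_eq] using hε
    set y : ℤ → ℝ := fun s => if s = t + 1 then ystar s + ε else ystar s with hy
    have hyne : ∀ s, s ≠ t + 1 → y s = ystar s := fun s hs => if_neg hs
    have hyt1 : y (t + 1) = ystar (t + 1) + ε := if_pos rfl
    have hkey := hmin y ⟨by rw [hyne a (by omega)]; exact hbc.1,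
        by rw [hyne b (by omega)]; exact hbc.2⟩ ?_
    · rw [hsum ystar (fun _ _ => rfl), hsum y hyne, hyt1] at hkey
      simp only [hg]
      have : ystar (t + 1) + 0 = ystar (t + 1) := by ring
      rw [this]
      linarith
    · intro s _
      by_cases hs : s = t + 1
      · rw [hs, hyt1]; simpa using hεδ
      · rw [hyne s hs]; simpa using hδ
  -- derivative of g at 0
  have hd1 : HasDerivAt (fun ε => L t (ystar (t + 1) + ε) (ystar (t + 1) + ε - ystar t))
      (L0 t (ystar (t + 1)) (ystar (t + 1) - ystar t)
        + L1 t (ystar (t + 1)) (ystar (t + 1) - ystar t)) 0 := by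
    have hc : HasDerivAt (fun ε : ℝ => (ystar (t + 1) + ε, ystar (t + 1) + ε - ystar t))
        ((1 : ℝ), (1 : ℝ)) 0 := by
      have h1 : HasDerivAt (fun ε : ℝ => ystar (t + 1) + ε) 1 0 := by
        simpa using (hasDerivAt_id (0 : ℝ)).const_add (ystar (t + 1))
      exact h1.prodMk (h1.sub_const (ystar t))
    have := aux_partial (fun p : ℝ × ℝ => L t p.1 p.2) (ystar (t + 1))
      (ystar (t + 1) - ystar t) (L0 t (ystar (t + 1)) (ystar (t + 1) - ystar t))
      (L1 t (ystar (t + 1)) (ystar (t + 1) - ystar t)) (hC t) (hL0 t _ _) (hL1 t _ _)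
      (fun ε : ℝ => (ystar (t + 1) + ε, ystar (t + 1) + ε - ystar t)) (1, 1) 0
      (by norm_num) hc
    simpa using this
  have hd2 : HasDerivAt
      (fun ε => L (t + 1) (ystar (t + 2)) (ystar (t + 2) - (ystar (t + 1) + ε)))
      (-(L1 (t + 1) (ystar (t + 2)) (ystar (t + 2) - ystar (t + 1)))) 0 := by
    have hc : HasDerivAt
        (fun ε : ℝ => ((ystar (t + 2) : ℝ), ystar (t + 2) - (ystar (t + 1) + ε)))
        ((0 : ℝ), (-1 : ℝ)) 0 := by
      have h1 : HasDerivAt (fun ε : ℝ => ystar (t + 2) - (ystar (t + 1) + ε)) (-1) 0 := by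
        have : HasDerivAt (fun ε : ℝ => ystar (t + 1) + ε) 1 0 := by
          simpa using (hasDerivAt_id (0 : ℝ)).const_add (ystar (t + 1))
        simpa using (this.const_sub (ystar (t + 2)))
      exact (hasDerivAt_const (x := (0 : ℝ)) (c := ystar (t + 2))).prodMk h1
    have := aux_partial (fun p : ℝ × ℝ => L (t + 1) p.1 p.2) (ystar (t + 2))
      (ystar (t + 2) - ystar (t + 1)) _ _ (hC (t + 1)) (hL0 (t + 1) _ _) (hL1 (t + 1) _ _)
      (fun ε : ℝ => ((ystar (t + 2) : ℝ), ystar (t + 2) - (ystar (t + 1) + ε))) (0, -1) 0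
      (by norm_num) hc
    simpa using this
  have hgd : HasDerivAt g
      (L0 t (ystar (t + 1)) (ystar (t + 1) - ystar t)
        + L1 t (ystar (t + 1)) (ystar (t + 1) - ystar t)
        + -(L1 (t + 1) (ystar (t + 2)) (ystar (t + 2) - ystar (t + 1)))) 0 := hd1.add hd2
  have hzero := hlm.hasDerivAt_eq_zero hgd
  linarith
end
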